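/- arXiv:1408.0455 — 4 statements merged into one kernel-verified Lean document; each statement's English description precedes it below -/
import Mathlib

section
/- Let Y ~ Beta(K-1, n_T-K) with integers 1 < K < n_T. Then E[-ln Y] = Σ_{m=K-1}^{n_T-2} Σ_{l=0}^{n_T-m-2} [(n_T-2)! / (m! · l! · (n_T-m-2-l)!)] · (-1)^l / (m+l). -/
open Finset

noncomputable def Saux (n k : ℕ) : ℝ :=
  ∑ l ∈ Finset.range (n+1), (-1:ℝ)^l * (n.choose l) / ((k:ℝ)+1+l)

lemma Saux_rec (n k : ℕ) : Saux (n+1) k = Saux n k - Saux n (k+1) := by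
  have f0 : (-1:ℝ)^(0:ℕ) * (n.choose 0 : ℝ) / ((k:ℝ)+1+(0:ℕ)) = 1/((k:ℝ)+1) := by
    simp
  have hB : ∑ i ∈ range (n+1),
      (-1:ℝ)^(i+1) * (n.choose (i+1) : ℝ) / ((k:ℝ)+1+(i+1:ℕ))
      = Saux n k - 1/((k:ℝ)+1) := by
    have h1 := Finset.sum_range_succ'
      (fun l => (-1:ℝ)^l * (n.choose l : ℝ) / ((k:ℝ)+1+l)) (n+1)
    have h2 := Finset.sum_range_succ
      (fun l => (-1:ℝ)^l * (n.choose l : ℝ) / ((k:ℝ)+1+l)) (n+1)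
    have hz : (-1:ℝ)^(n+1) * (n.choose (n+1) : ℝ) / ((k:ℝ)+1+(n+1:ℕ)) = 0 := by
      simp [Nat.choose_eq_zero_of_lt]
    rw [h2, hz, add_zero] at h1
    unfold Saux
    rw [f0] at h1
    push_cast at h1 ⊢
    linarith
  unfold Saux
  rw [Finset.sum_range_succ'
      (fun l => (-1:ℝ)^l * ((n+1).choose l : ℝ) / ((k:ℝ)+1+l)) (n+1)]
  have hsplit : ∀ i ∈ range (n+1),
      (-1:ℝ)^(i+1) * (((n+1).choose (i+1)) : ℝ) / ((k:ℝ)+1+(i+1:ℕ))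
      = (-((-1:ℝ)^i * (n.choose i : ℝ) / (((k+1:ℕ):ℝ)+1+i)))
        + (-1:ℝ)^(i+1) * (n.choose (i+1) : ℝ) / ((k:ℝ)+1+(i+1:ℕ)) := by
    intro i _
    rw [Nat.choose_succ_succ]
    push_cast
    have hpos : (k:ℝ)+1+(i+1) ≠ 0 := by positivity
    field_simp
    ring
  rw [Finset.sum_congr rfl hsplit, Finset.sum_add_distrib, Finset.sum_neg_distrib]
  rw [hB]
  have hc0 : (-1:ℝ)^(0:ℕ) * (((n+1).choose 0) : ℝ) / ((k:ℝ)+1+(0:ℕ)) = 1/((k:ℝ)+1) := by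
    simp
  rw [hc0]
  show -(Saux n (k+1)) + (Saux n k - 1/((k:ℝ)+1)) + 1/((k:ℝ)+1)
      = Saux n k - Saux n (k+1)
  ring

lemma Saux_closed (n k : ℕ) :
    Saux n k = (n.factorial * k.factorial : ℝ) / ((k+1+n).factorial : ℝ) := by
  induction n generalizing k with
  | zero =>
      unfold Saux
      simp [Nat.factorial_succ]
      field_simp
  | succ n ih =>
      rw [Saux_rec, ih k, ih (k+1)]
      have e1 : k+1+(n+1) = (k+1+n)+1 := by omega
      have e2 : (k+1)+1+n = (k+1+n)+1 := by omega
      rw [e1, e2, Nat.factorial_succ (k+1+n), Nat.factorial_succ n, Nat.factorial_succ k]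
      have h1 : ((k+1+n).factorial : ℝ) ≠ 0 := by exact_mod_cast (k+1+n).factorial_ne_zero
      have h2 : ((k+1+n:ℕ):ℝ) + 1 ≠ 0 := by positivity
      push_cast
      field_simp
      ring

lemma my_inner_sum (n k : ℕ) :
    ∑ l ∈ Finset.range (n+1),
      (((k+1+n).factorial : ℝ) / (((k+1).factorial : ℝ) * (l.factorial : ℝ) * ((n-l).factorial : ℝ)))
        * (-1:ℝ)^l * (1/(((k:ℝ)+1)+l))
      = 1/((k:ℝ)+1) := by
  have hterm : ∀ l ∈ Finset.range (n+1),
      (((k+1+n).factorial : ℝ) / (((k+1).factorial : ℝ) * (l.factorial : ℝ) * ((n-l).factorial : ℝ)))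
        * (-1:ℝ)^l * (1/(((k:ℝ)+1)+l))
      = (((k+1+n).factorial : ℝ) / (((k+1).factorial : ℝ) * (n.factorial : ℝ)))
          * ((-1:ℝ)^l * (n.choose l : ℝ) / ((k:ℝ)+1+l)) := by
    intro l hl
    have hln : l ≤ n := Nat.lt_succ_iff.mp (mem_range.mp hl)
    have hch : ((n.factorial : ℝ)) = (n.choose l : ℝ) * (l.factorial : ℝ) * ((n-l).factorial : ℝ) := by
      exact_mod_cast (Nat.choose_mul_factorial_mul_factorial hln).symm
    have h1 : ((l.factorial : ℝ)) ≠ 0 := by exact_mod_cast l.factorial_ne_zero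
    have h2 : (((n-l).factorial : ℝ)) ≠ 0 := by exact_mod_cast (n-l).factorial_ne_zero
    have h3 : (((k+1).factorial : ℝ)) ≠ 0 := by exact_mod_cast (k+1).factorial_ne_zero
    have h4 : ((n.factorial : ℝ)) ≠ 0 := by exact_mod_cast n.factorial_ne_zero
    have h5 : ((k:ℝ)+1+l) ≠ 0 := by positivity
    field_simp
    rw [hch]
    ring
  rw [Finset.sum_congr rfl hterm, ← Finset.mul_sum]
  have : (∑ l ∈ Finset.range (n+1), (-1:ℝ)^l * (n.choose l : ℝ) / ((k:ℝ)+1+l)) = Saux n k := rfl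
  rw [this, Saux_closed]
  have h3 : (((k+1).factorial : ℝ)) ≠ 0 := by exact_mod_cast (k+1).factorial_ne_zero
  have h4 : ((n.factorial : ℝ)) ≠ 0 := by exact_mod_cast n.factorial_ne_zero
  have h6 : (((k+1+n).factorial : ℝ)) ≠ 0 := by exact_mod_cast (k+1+n).factorial_ne_zero
  rw [Nat.factorial_succ k]
  push_cast
  field_simp
open MeasureTheory Real Finset intervalIntegral Set

lemma neg_log_integrableOn :
    IntegrableOn (fun x : ℝ => -Real.log x) (Set.Ioc (0:ℝ) 1) volume := by
  have hcont : ContinuousOn (fun x : ℝ => x - x * Real.log x) (Set.Icc (0:ℝ) 1) :=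
    (continuous_id.sub Real.continuous_mul_log).continuousOn
  have hderiv : ∀ x ∈ Set.Ioo (0:ℝ) 1,
      HasDerivAt (fun x : ℝ => x - x * Real.log x) (-Real.log x) x := by
    intro x hx
    have h1 : HasDerivAt (fun x : ℝ => x * Real.log x) (1 * Real.log x + x * x⁻¹) x :=
      (hasDerivAt_id x).mul (Real.hasDerivAt_log hx.1.ne')
    have h2 := (hasDerivAt_id x).sub h1
    refine h2.congr_deriv ?_
    rw [mul_inv_cancel₀ hx.1.ne']
    ring
  have hpos : ∀ x ∈ Set.Ioo (0:ℝ) 1, 0 ≤ -Real.log x := by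
    intro x hx
    simpa using Real.log_nonpos hx.1.le hx.2.le
  exact intervalIntegral.integrableOn_deriv_of_nonneg hcont hderiv hpos

lemma intInt (a b : ℕ) :
    IntervalIntegrable (fun x : ℝ => -Real.log x * x^a * (1-x)^b) volume 0 1 := by
  rw [intervalIntegrable_iff_integrableOn_Ioc_of_le zero_le_one]
  have hmeas : AEStronglyMeasurable (fun x : ℝ => -Real.log x * x^a * (1-x)^b)
      (volume.restrict (Set.Ioc (0:ℝ) 1)) := by
    refine (Measurable.aestronglyMeasurable ?_)
    exact ((Real.measurable_log.neg).mul (measurable_id.pow_const a)).mul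
      ((measurable_const.sub measurable_id).pow_const b)
  refine Integrable.mono neg_log_integrableOn hmeas ?_
  rw [ae_restrict_iff' measurableSet_Ioc]
  refine ae_of_all _ (fun x hx => ?_)
  have hx0 : 0 < x := hx.1
  have hx1 : x ≤ 1 := hx.2
  have h1 : |x^a| ≤ 1 := by
    rw [abs_of_nonneg (by positivity)]
    exact pow_le_one₀ hx0.le hx1
  have h2 : |(1-x)^b| ≤ 1 := by
    rw [abs_pow]
    refine pow_le_one₀ (abs_nonneg _) ?_
    rw [abs_le]; constructor <;> linarith
  have : ‖-Real.log x * x^a * (1-x)^b‖ = ‖-Real.log x‖ * |x^a| * |(1-x)^b| := by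
    simp [abs_mul]
  rw [this]
  calc ‖-Real.log x‖ * |x^a| * |(1-x)^b| ≤ ‖-Real.log x‖ * 1 * 1 := by
        gcongr
    _ = ‖-Real.log x‖ := by ring

lemma base_integral (a : ℕ) :
    ∫ x in (0:ℝ)..1, -Real.log x * x^a = 1/((a:ℝ)+1)^2 := by
  set c : ℝ := 1/((a:ℝ)+1)^2
  set d : ℝ := 1/((a:ℝ)+1)
  set F : ℝ → ℝ := fun y => y^(a+1) * c - y^(a+1) * Real.log y * d with hF
  have ha1 : ((a:ℝ)+1) ≠ 0 := by positivity
  have hFc : Continuous F := by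
    have : F = fun y => y^(a+1) * c - y^a * (y * Real.log y) * d := by
      funext y; simp only [hF, pow_succ]; ring
    rw [this]
    exact ((continuous_pow (a+1)).mul continuous_const).sub
      (((continuous_pow a).mul Real.continuous_mul_log).mul continuous_const)
  have hderiv : ∀ x ∈ Set.Ioo (0:ℝ) 1, HasDerivAt F (-Real.log x * x^a) x := by
    intro x hx
    have hx0 : x ≠ 0 := hx.1.ne'
    have h1 : HasDerivAt (fun y : ℝ => y^(a+1)) (((a:ℝ)+1) * x^a) x := by
      simpa using hasDerivAt_pow (a+1) x
    have h2 : HasDerivAt (fun y : ℝ => y^(a+1) * Real.log y)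
        ((((a:ℝ)+1) * x^a) * Real.log x + x^(a+1) * x⁻¹) x :=
      h1.mul (Real.hasDerivAt_log hx0)
    have h3 := (h1.mul_const c).sub (h2.mul_const d)
    refine h3.congr_deriv ?_
    have hxp : x^(a+1) * x⁻¹ = x^a := by
      rw [pow_succ]; field_simp
    rw [hxp]
    simp only [c, d]
    field_simp
    ring
  have hint : IntervalIntegrable (fun x : ℝ => -Real.log x * x^a) volume 0 1 := by
    have := intInt a 0
    simpa using this
  have := intervalIntegral.integral_eq_sub_of_hasDerivAt_of_le zero_le_one
    hFc.continuousOn hderiv hint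
  rw [this]
  simp [hF, c, zero_pow (Nat.succ_ne_zero a)]

lemma I_closed (b : ℕ) : ∀ a : ℕ,
    ∫ x in (0:ℝ)..1, -Real.log x * x^a * (1-x)^b
      = ((a.factorial : ℝ) * (b.factorial : ℝ) / ((a+b+1).factorial : ℝ))
        * ∑ j ∈ Finset.range (b+1), 1/((a:ℝ)+1+j) := by
  induction b with
  | zero =>
      intro a
      have h1 : (∫ x in (0:ℝ)..1, -Real.log x * x^a * (1-x)^0)
          = ∫ x in (0:ℝ)..1, -Real.log x * x^a := by
        refine intervalIntegral.integral_congr (fun x _ => ?_)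
        simp
      rw [h1, base_integral]
      have ha1 : ((a:ℝ)+1) ≠ 0 := by positivity
      have hfa : ((a.factorial : ℝ)) ≠ 0 := by exact_mod_cast a.factorial_ne_zero
      simp only [Nat.factorial, Nat.add_zero, zero_add, Finset.range_one, Finset.sum_singleton,
        Nat.cast_zero, add_zero, Nat.factorial_succ]
      push_cast
      field_simp
  | succ b ih =>
      intro a
      have hsplit : (∫ x in (0:ℝ)..1, -Real.log x * x^a * (1-x)^(b+1))
          = (∫ x in (0:ℝ)..1, (-Real.log x * x^a * (1-x)^b - -Real.log x * x^(a+1) * (1-x)^b)) := by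
        refine intervalIntegral.integral_congr (fun x _ => ?_)
        simp only [pow_succ]
        ring
      rw [hsplit, intervalIntegral.integral_sub (intInt a b) (intInt (a+1) b), ih a, ih (a+1)]
      -- sums manipulation
      have hS1 : ∑ j ∈ Finset.range (b+1), 1/((a:ℝ)+1+j)
          = (∑ j ∈ Finset.range (b+2), 1/((a:ℝ)+1+j)) - 1/((a:ℝ)+1+(b+1)) := by
        conv_rhs => rw [Finset.sum_range_succ]
        push_cast
        ring
      have hS2 : ∑ j ∈ Finset.range (b+1), 1/(((a+1:ℕ):ℝ)+1+j)
          = (∑ j ∈ Finset.range (b+2), 1/((a:ℝ)+1+j)) - 1/((a:ℝ)+1) := by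
        rw [Finset.sum_range_succ' (fun j => 1/((a:ℝ)+1+j)) (b+1)]
        have : ∀ i ∈ Finset.range (b+1), 1/((a:ℝ)+1+((i+1:ℕ):ℝ)) = 1/(((a+1:ℕ):ℝ)+1+i) := by
          intro i _
          push_cast
          ring
        rw [Finset.sum_congr rfl this]
        push_cast
        ring
      rw [hS1, hS2]
      have e1 : a+(b+1)+1 = (a+b+1)+1 := by omega
      have e2 : (a+1)+b+1 = (a+b+1)+1 := by omega
      rw [e1, e2, Nat.factorial_succ (a+b+1), Nat.factorial_succ b, Nat.factorial_succ a]
      have h1 : ((a+b+1).factorial : ℝ) ≠ 0 := by exact_mod_cast (a+b+1).factorial_ne_zero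
      have h2 : ((a:ℝ)+1) ≠ 0 := by positivity
      have h3 : ((a:ℝ)+1+(b+1)) ≠ 0 := by positivity
      have h4 : ((a+b+1:ℕ):ℝ)+1 ≠ 0 := by positivity
      push_cast
      field_simp
      ring

open scoped NNReal ENNReal

/-- E[-ln Y] for Y ~ Beta(K-1, n_T-K). -/
theorem stmt_4 (nT K : ℕ) (hK : 1 < K) (hKn : K < nT)
    (μ : Measure ℝ)
    (hμ : μ = volume.withDensity (fun x : ℝ =>
      if 0 < x ∧ x < 1 then
        ENNReal.ofReal (x ^ (K - 2) * (1 - x) ^ (nT - K - 1) /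
          (Real.Gamma ((K : ℝ) - 1) * Real.Gamma ((nT : ℝ) - K) /
            Real.Gamma ((nT : ℝ) - 1)))
      else 0)) :
    ∫ y, -Real.log y ∂μ =
      ∑ m ∈ Finset.Icc (K - 1) (nT - 2), ∑ l ∈ Finset.range (nT - m - 1),
        ((Nat.factorial (nT - 2) : ℝ) /
            ((Nat.factorial m : ℝ) * (Nat.factorial l) * (Nat.factorial (nT - m - 2 - l)))) *
          (-1 : ℝ) ^ l * (1 / ((m : ℝ) + l)) := by
  obtain ⟨a, rfl⟩ : ∃ a, K = a + 2 := ⟨K - 2, by omega⟩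
  obtain ⟨b, rfl⟩ : ∃ b, nT = a + b + 3 := ⟨nT - a - 3, by omega⟩
  clear hK hKn
  -- the Gamma constant
  have hG1 : Real.Gamma (((a+2:ℕ) : ℝ) - 1) = (a.factorial : ℝ) := by
    have h : ((a+2:ℕ) : ℝ) - 1 = (a:ℝ) + 1 := by push_cast; ring
    rw [h, Real.Gamma_nat_eq_factorial]
  have hG2 : Real.Gamma (((a+b+3:ℕ) : ℝ) - ((a+2:ℕ):ℝ)) = (b.factorial : ℝ) := by
    have h : ((a+b+3:ℕ) : ℝ) - ((a+2:ℕ):ℝ) = (b:ℝ) + 1 := by push_cast; ring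
    rw [h, Real.Gamma_nat_eq_factorial]
  have hG3 : Real.Gamma (((a+b+3:ℕ) : ℝ) - 1) = ((a+b+1).factorial : ℝ) := by
    have h : ((a+b+3:ℕ) : ℝ) - 1 = ((a+b+1:ℕ):ℝ) + 1 := by push_cast; ring
    rw [h, Real.Gamma_nat_eq_factorial]
  set c : ℝ := (a.factorial : ℝ) * (b.factorial : ℝ) / ((a+b+1).factorial : ℝ) with hc
  have hfa : (0:ℝ) < a.factorial := by exact_mod_cast a.factorial_pos
  have hfb : (0:ℝ) < b.factorial := by exact_mod_cast b.factorial_pos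
  have hfab : (0:ℝ) < (a+b+1).factorial := by exact_mod_cast (a+b+1).factorial_pos
  have hcpos : 0 < c := by positivity
  have hexp1 : a + 2 - 2 = a := by omega
  have hexp2 : a + b + 3 - (a+2) - 1 = b := by omega
  -- rewrite μ
  have hμ' : μ = volume.withDensity (fun x : ℝ =>
      ((if 0 < x ∧ x < 1 then Real.toNNReal (x ^ a * (1 - x) ^ b / c) else 0 : ℝ≥0) : ℝ≥0∞)) := by
    rw [hμ]
    congr 1
    funext x
    rw [hexp1, hexp2, hG1, hG2, hG3, ← hc]
    split_ifs with h
    · rfl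
    · simp
  -- density function measurability
  have hgm : Measurable (fun x : ℝ => x ^ a * (1 - x) ^ b / c) := by
    exact ((measurable_id.pow_const a).mul
      ((measurable_const.sub measurable_id).pow_const b)).div_const c
  have hdm : Measurable (fun x : ℝ =>
      (if 0 < x ∧ x < 1 then Real.toNNReal (x ^ a * (1 - x) ^ b / c) else 0 : ℝ≥0)) := by
    refine Measurable.ite ?_ hgm.real_toNNReal measurable_const
    exact (measurableSet_Ioo : MeasurableSet (Set.Ioo (0:ℝ) 1))
  rw [hμ', integral_withDensity_eq_integral_smul hdm]
  -- rewrite integrand as an indicator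
  have hind : (fun x : ℝ =>
      (if 0 < x ∧ x < 1 then Real.toNNReal (x ^ a * (1 - x) ^ b / c) else 0 : ℝ≥0) • (-Real.log x))
      = Set.indicator (Set.Ioo (0:ℝ) 1)
          (fun x => (x ^ a * (1 - x) ^ b / c) * (-Real.log x)) := by
    funext x
    by_cases h : 0 < x ∧ x < 1
    · rw [if_pos h, Set.indicator_of_mem (by exact h)]
      have hgnn : 0 ≤ x ^ a * (1 - x) ^ b / c := by
        have h1 : (0:ℝ) ≤ x ^ a := pow_nonneg h.1.le a
        have h2 : (0:ℝ) ≤ (1-x) ^ b := by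
          apply pow_nonneg; linarith [h.2]
        exact div_nonneg (mul_nonneg h1 h2) hcpos.le
      simp [NNReal.smul_def, Real.coe_toNNReal _ hgnn]
    · rw [if_neg h, Set.indicator_of_notMem (by exact h)]
      simp
  rw [hind, MeasureTheory.integral_indicator measurableSet_Ioo,
    ← MeasureTheory.integral_Ioc_eq_integral_Ioo,
    ← intervalIntegral.integral_of_le zero_le_one]
  have hcongr : (∫ x in (0:ℝ)..1, (x ^ a * (1 - x) ^ b / c) * (-Real.log x))
      = ∫ x in (0:ℝ)..1, (1/c) * (-Real.log x * x ^ a * (1 - x) ^ b) := by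
    refine intervalIntegral.integral_congr (fun x _ => ?_)
    ring
  rw [hcongr, intervalIntegral.integral_const_mul, I_closed b a]
  -- LHS is now (1/c) * (c * sum) = sum over range
  have hLHS : (1/c) * (((a.factorial : ℝ) * (b.factorial : ℝ) / ((a+b+1).factorial : ℝ))
      * ∑ j ∈ Finset.range (b+1), 1/((a:ℝ)+1+j))
      = ∑ j ∈ Finset.range (b+1), 1/((a:ℝ)+1+j) := by
    rw [← hc]
    field_simp
  rw [hLHS]
  -- RHS: inner sums collapse to 1/m
  have hRHS : ∀ m ∈ Finset.Icc (a+2-1) (a+b+3-2),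
      (∑ l ∈ Finset.range (a+b+3-m-1),
        ((Nat.factorial (a+b+3-2) : ℝ) /
            ((Nat.factorial m : ℝ) * (Nat.factorial l) * (Nat.factorial (a+b+3-m-2-l)))) *
          (-1 : ℝ) ^ l * (1 / ((m : ℝ) + l)))
      = 1 / (m:ℝ) := by
    intro m hm
    obtain ⟨hm1, hm2⟩ := Finset.mem_Icc.mp hm
    set n := a+b+1-m with hn
    have h := my_inner_sum n (m-1)
    have e1 : m-1+1+n = a+b+3-2 := by omega
    have e2 : m-1+1 = m := by omega
    rw [e1, e2] at h
    have e3 : ((m-1:ℕ):ℝ) + 1 = (m:ℝ) := by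
      have h1 : 1 ≤ m := by omega
      push_cast [h1]
      ring
    rw [e3] at h
    rw [show a+b+3-m-1 = n+1 from by omega, show a+b+3-m-2 = n from by omega]
    exact h
  rw [Finset.sum_congr rfl hRHS]
  -- finally, match the two sums
  rw [show a+2-1 = a+1 from by omega, show a+b+3-2 = a+b+1 from by omega,
    ← Finset.Ico_add_one_right_eq_Icc, Finset.sum_Ico_eq_sum_range,
    show a+b+1+1-(a+1) = b+1 from by omega]
  refine Finset.sum_congr rfl (fun j _ => ?_)
  push_cast
  ring
end

section
/- For integers n ≥ 1 and n_T ≥ 2 and any 1 ≤ i ≤ n_T - 1, Γ(n)/Γ(n + i/(n_T-1)) ≤ (n - 1/2 + i/(2(n_T-1)))^{-i/(n_T-1)} ≤ (n - 1/2)^{-i/(n_T-1)}. -/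
open Real

section KershawAux

open Set Filter Topology

/-- `u ↦ log (c+u) - log (c-u)` is convex on `[0,1]` when `c ≥ 2`. -/
private lemma log_ratio_convex' {c : ℝ} (hc : 2 ≤ c) :
    ConvexOn ℝ (Icc (0:ℝ) 1) (fun u => Real.log (c + u) - Real.log (c - u)) := by
  have hpos : ∀ x ∈ Icc (0:ℝ) 1, 0 < c + x ∧ 0 < c - x := by
    intro x hx; constructor <;> [linarith [hx.1]; linarith [hx.2]]
  set g' : ℝ → ℝ := fun x => (c + x)⁻¹ + (c - x)⁻¹ with hg'
  have hder : ∀ x ∈ Ioo (0:ℝ) 1, HasDerivAt (fun u => Real.log (c + u) - Real.log (c - u)) (g' x) x := by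
    intro x hx
    have h1 : 0 < c + x := by linarith [hx.1]
    have h2 : 0 < c - x := by linarith [hx.2]
    have d1 : HasDerivAt (fun u : ℝ => Real.log (c + u)) ((c + x)⁻¹) x := by
      have := (((hasDerivAt_id x).const_add c).log h1.ne')
      simpa using this
    have d2 : HasDerivAt (fun u : ℝ => Real.log (c - u)) (-(c - x)⁻¹) x := by
      have hd : HasDerivAt (fun u : ℝ => c - u) (-1) x := by
        simpa using ((hasDerivAt_id x).const_sub c)
      have := hd.log h2.ne'
      simpa [neg_div, one_div] using this
    exact (d1.sub d2).congr_deriv (by simp [hg'])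
  have hderEq : Set.EqOn (deriv (fun u => Real.log (c + u) - Real.log (c - u))) g' (Ioo (0:ℝ) 1) :=
    fun x hx => (hder x hx).deriv
  have hder2 : ∀ x ∈ Ioo (0:ℝ) 1, HasDerivAt g' ((c - x)⁻¹ ^ 2 - (c + x)⁻¹ ^ 2) x := by
    intro x hx
    have h1 : 0 < c + x := by linarith [hx.1]
    have h2 : 0 < c - x := by linarith [hx.2]
    have d1 : HasDerivAt (fun u : ℝ => (c + u)⁻¹) (-(1:ℝ) / (c + x) ^ 2) x := by
      exact ((hasDerivAt_id' x).const_add c).inv h1.ne'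
    have d2 : HasDerivAt (fun u : ℝ => (c - u)⁻¹) (-(-1:ℝ) / (c - x) ^ 2) x := by
      have hd : HasDerivAt (fun u : ℝ => c - u) (-1) x := by
        simpa using ((hasDerivAt_id x).const_sub c)
      exact hd.inv h2.ne'
    have := d1.add d2
    exact this.congr_deriv (by rw [inv_pow, inv_pow]; ring)
  apply convexOn_of_deriv2_nonneg (convex_Icc 0 1)
  · apply ContinuousOn.sub
    · exact (Continuous.continuousOn (by continuity)).log (fun x hx => (hpos x hx).1.ne')
    · exact (Continuous.continuousOn (by continuity)).log (fun x hx => (hpos x hx).2.ne')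
  · rw [interior_Icc]
    exact fun x hx => (hder x hx).differentiableAt.differentiableWithinAt
  · rw [interior_Icc]
    intro x hx
    have : DifferentiableAt ℝ g' x := (hder2 x hx).differentiableAt
    exact (this.congr_of_eventuallyEq
      (Filter.eventuallyEq_of_mem (isOpen_Ioo.mem_nhds hx) hderEq)).differentiableWithinAt
  · rw [interior_Icc]
    intro x hx
    have heq : deriv (deriv (fun u => Real.log (c + u) - Real.log (c - u))) x
        = deriv g' x := by
      apply Filter.EventuallyEq.deriv_eq
      exact Filter.eventuallyEq_of_mem (isOpen_Ioo.mem_nhds hx) hderEq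
    have h1 : 0 < c + x := by linarith [hx.1]
    have h2 : 0 < c - x := by linarith [hx.2]
    simp only [Function.iterate_succ, Function.iterate_zero, Function.comp_apply, id_eq]
    rw [heq, (hder2 x hx).deriv]
    have : (c + x)⁻¹ ≤ (c - x)⁻¹ := by
      apply inv_anti₀ h2; linarith [hx.1]
    nlinarith [inv_nonneg.mpr h1.le, inv_nonneg.mpr h2.le]

private lemma key_log' {c t : ℝ} (hc : 2 ≤ c) (ht0 : 0 ≤ t) (ht1 : t ≤ 1) :
    Real.log (c + t) - Real.log (c - t) ≤ t * (Real.log (c + 1) - Real.log (c - 1)) := by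
  have h := (log_ratio_convex' hc).2 (x := 0) (y := 1)
    (by simp) (by simp) (by linarith : (0:ℝ) ≤ 1 - t) ht0 (by ring)
  simp only [smul_eq_mul, mul_zero, mul_one, zero_add, add_zero, sub_self] at h
  calc Real.log (c + t) - Real.log (c - t)
      = Real.log (c + ((1-t) * 0 + t * 1)) - Real.log (c - ((1-t) * 0 + t * 1)) := by ring_nf
    _ ≤ (1-t) * (Real.log (c + 0) - Real.log (c - 0)) + t * (Real.log (c + 1) - Real.log (c - 1)) := by
        simpa using h
    _ = t * (Real.log (c + 1) - Real.log (c - 1)) := by simp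

private lemma key_mul' {c t : ℝ} (hc : 2 ≤ c) (ht0 : 0 ≤ t) (ht1 : t ≤ 1) :
    (c - 1) ^ t * (c + t) ≤ (c + 1) ^ t * (c - t) := by
  have h1 : (0:ℝ) < c - 1 := by linarith
  have h2 : (0:ℝ) < c + 1 := by linarith
  have h3 : (0:ℝ) < c - t := by linarith
  have h4 : (0:ℝ) < c + t := by linarith
  have h := key_log' hc ht0 ht1
  have hexp := Real.exp_le_exp.mpr h
  rw [Real.exp_sub, Real.exp_log h4, Real.exp_log h3] at hexp
  have hrw : Real.exp (t * (Real.log (c + 1) - Real.log (c - 1)))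
      = (c + 1) ^ t / (c - 1) ^ t := by
    rw [← Real.log_div h2.ne' h1.ne', mul_comm, ← Real.rpow_def_of_pos (by positivity : (0:ℝ) < (c+1)/(c-1)),
      Real.div_rpow h2.le h1.le]
  rw [hrw, div_le_div_iff₀ h3 (by positivity)] at hexp
  nlinarith [hexp]

private lemma step_ineq' {x t : ℝ} (hx : 1 ≤ x) (ht0 : 0 ≤ t) (ht1 : t ≤ 1) :
    (x - 1/2 + t/2) ^ t * (x + t) ≤ (x + 1/2 + t/2) ^ t * x := by
  have hc : (2:ℝ) ≤ 2*x + t := by linarith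
  have h := key_mul' (c := 2*x + t) hc ht0 ht1
  have e1 : 2*x + t - 1 = 2 * (x - 1/2 + t/2) := by ring
  have e2 : 2*x + t + 1 = 2 * (x + 1/2 + t/2) := by ring
  have e3 : 2*x + t + t = 2 * (x + t) := by ring
  have e4 : 2*x + t - t = 2 * x := by ring
  rw [e1, e2, e3, e4, Real.mul_rpow (by norm_num) (by linarith),
    Real.mul_rpow (by norm_num) (by linarith)] at h
  have h2t : (0:ℝ) < (2:ℝ) ^ t := by positivity
  nlinarith [h]

/-- Log-convexity lower bound: `x·Γ(x) ≤ Γ(x+t)·(x+t)^(1-t)`. -/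
private lemma gamma_lb' {x t : ℝ} (hx : 0 < x) (ht0 : 0 < t) (ht1 : t < 1) :
    x * Real.Gamma x ≤ Real.Gamma (x + t) * (x + t) ^ (1 - t) := by
  have hxt : 0 < x + t := by linarith
  have h := Real.Gamma_mul_add_mul_le_rpow_Gamma_mul_rpow_Gamma
    (s := x + t) (t := x + t + 1) hxt (by linarith) ht0 (by linarith : (0:ℝ) < 1 - t)
    (by ring)
  have e1 : t * (x + t) + (1 - t) * (x + t + 1) = x + 1 := by ring
  rw [e1, Real.Gamma_add_one hx.ne', Real.Gamma_add_one hxt.ne'] at h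
  have hG : 0 < Real.Gamma (x + t) := Real.Gamma_pos_of_pos hxt
  calc x * Real.Gamma x ≤ Real.Gamma (x+t) ^ t * ((x+t) * Real.Gamma (x+t)) ^ (1-t) := h
    _ = Real.Gamma (x + t) * (x + t) ^ (1 - t) := by
        rw [Real.mul_rpow hxt.le hG.le, ← mul_assoc, mul_comm (Real.Gamma (x+t) ^ t),
          mul_assoc, ← Real.rpow_add hG, mul_comm]
        norm_num

private lemma kershaw' {t : ℝ} (ht0 : 0 < t) (ht1 : t < 1) (n : ℕ) (hn : 1 ≤ n) :
    ((n:ℝ) - 1/2 + t/2) ^ t * Real.Gamma n / Real.Gamma ((n:ℝ) + t) ≤ 1 := by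
  set F : ℕ → ℝ := fun m => ((m:ℝ) - 1/2 + t/2) ^ t * Real.Gamma m / Real.Gamma ((m:ℝ) + t)
    with hF
  have hGpos : ∀ m : ℕ, 1 ≤ m → 0 < Real.Gamma (m:ℝ) := by
    intro m hm; exact Real.Gamma_pos_of_pos (by exact_mod_cast hm)
  have hGtpos : ∀ m : ℕ, 1 ≤ m → 0 < Real.Gamma ((m:ℝ) + t) := by
    intro m hm
    have h1 : (1:ℝ) ≤ m := by exact_mod_cast hm
    exact Real.Gamma_pos_of_pos (by linarith)
  have hstep : ∀ m : ℕ, 1 ≤ m → F m ≤ F (m + 1) := by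
    intro m hm
    have hm1 : (1:ℝ) ≤ (m:ℝ) := by exact_mod_cast hm
    have hmpos : (0:ℝ) < m := by linarith
    have hmt : (0:ℝ) < (m:ℝ) + t := by linarith
    have hg := hGpos m hm
    have hgt := hGtpos m hm
    have e1 : ((m+1 : ℕ):ℝ) = (m:ℝ) + 1 := by push_cast; ring
    have e2 : Real.Gamma ((m:ℝ) + 1) = (m:ℝ) * Real.Gamma m := Real.Gamma_add_one (by positivity)
    have e3 : Real.Gamma ((m:ℝ) + 1 + t) = ((m:ℝ) + t) * Real.Gamma ((m:ℝ) + t) := by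
      rw [show (m:ℝ) + 1 + t = ((m:ℝ) + t) + 1 by ring, Real.Gamma_add_one hmt.ne']
    have hs := step_ineq' (x := (m:ℝ)) (t := t) hm1 ht0.le ht1.le
    rw [hF]
    simp only [e1, e2, e3]
    rw [div_le_div_iff₀ hgt (by positivity)]
    calc ((m:ℝ) - 1/2 + t/2) ^ t * Real.Gamma m * (((m:ℝ) + t) * Real.Gamma ((m:ℝ) + t))
        = (((m:ℝ) - 1/2 + t/2) ^ t * ((m:ℝ) + t)) * (Real.Gamma m * Real.Gamma ((m:ℝ) + t)) := by
          ring
      _ ≤ (((m:ℝ) + 1/2 + t/2) ^ t * (m:ℝ)) * (Real.Gamma m * Real.Gamma ((m:ℝ) + t)) := by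
          apply mul_le_mul_of_nonneg_right hs (by positivity)
      _ = ((m:ℝ) + 1 - 1/2 + t/2) ^ t * ((m:ℝ) * Real.Gamma m) * Real.Gamma ((m:ℝ) + t) := by
          rw [show (m:ℝ) + 1 - 1/2 + t/2 = (m:ℝ) + 1/2 + t/2 by ring]; ring
  have hmono : ∀ k : ℕ, F n ≤ F (n + k) := by
    intro k
    induction k with
    | zero => simp
    | succ k ih => exact ih.trans (hstep (n+k) (by omega))
  set G : ℕ → ℝ := fun k => (1 + (t/2 - 1/2)/((n:ℝ) + k)) ^ t * (1 + t/((n:ℝ) + k)) ^ (1 - t)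
    with hG
  have hFG : ∀ k : ℕ, F n ≤ G k := by
    intro k
    refine (hmono k).trans ?_
    set u : ℝ := ((n + k : ℕ):ℝ) with hu
    have hu1 : (1:ℝ) ≤ u := by rw [hu]; exact_mod_cast (by omega : 1 ≤ n + k)
    have hupos : (0:ℝ) < u := by linarith
    have hut : (0:ℝ) < u + t := by linarith
    have hA : (0:ℝ) < u - 1/2 + t/2 := by linarith
    have hg := hGpos (n+k) (by omega)
    have hgt := hGtpos (n+k) (by omega)
    have hlb := gamma_lb' (x := u) (t := t) hupos ht0 ht1
    have h1 : F (n + k) ≤ (u - 1/2 + t/2) ^ t * (u + t) ^ (1-t) / u := by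
      rw [hF]
      simp only [← hu]
      rw [div_le_div_iff₀ hgt hupos]
      calc (u - 1/2 + t/2) ^ t * Real.Gamma u * u
          = (u - 1/2 + t/2) ^ t * (u * Real.Gamma u) := by ring
        _ ≤ (u - 1/2 + t/2) ^ t * (Real.Gamma (u + t) * (u + t) ^ (1-t)) := by
            apply mul_le_mul_of_nonneg_left hlb (by positivity)
        _ = (u - 1/2 + t/2) ^ t * (u + t) ^ (1-t) * Real.Gamma (u + t) := by ring
    refine h1.trans_eq ?_
    have hcast : u = (n:ℝ) + k := by rw [hu]; push_cast; ring
    simp only [hG]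
    rw [← hcast]
    have e1 : 1 + (t/2 - 1/2)/u = (u - 1/2 + t/2)/u := by field_simp; ring
    have e2 : 1 + t/u = (u + t)/u := by field_simp
    rw [e1, e2, Real.div_rpow hA.le hupos.le, Real.div_rpow hut.le hupos.le,
      div_mul_div_comm, ← Real.rpow_add hupos, show t + (1-t) = 1 by ring, Real.rpow_one]
  have hlim : Tendsto G atTop (𝓝 1) := by
    have hu : Tendsto (fun k : ℕ => (n:ℝ) + k) atTop atTop :=
      tendsto_atTop_add_const_left _ _ tendsto_natCast_atTop_atTop
    have hbase : ∀ d : ℝ, Tendsto (fun k : ℕ => 1 + d/((n:ℝ) + k)) atTop (𝓝 1) := by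
      intro d
      have h0 : Tendsto (fun k : ℕ => d/((n:ℝ) + k)) atTop (𝓝 0) := by
        simpa [div_eq_mul_inv] using (tendsto_inv_atTop_zero.comp hu).const_mul d
      simpa using (tendsto_const_nhds (x := (1:ℝ))).add h0
    have hc : ∀ e : ℝ, ContinuousAt (fun x : ℝ => x ^ e) 1 :=
      fun e => Real.continuousAt_rpow_const 1 e (Or.inl one_ne_zero)
    have h1 : Tendsto (fun k : ℕ => (1 + (t/2 - 1/2)/((n:ℝ) + k)) ^ t) atTop (𝓝 1) := by
      have := ((hc t).tendsto.comp (hbase (t/2 - 1/2)))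
      simpa [Real.one_rpow, Function.comp_def] using this
    have h2 : Tendsto (fun k : ℕ => (1 + t/((n:ℝ) + k)) ^ (1-t)) atTop (𝓝 1) := by
      have := ((hc (1-t)).tendsto.comp (hbase t))
      simpa [Real.one_rpow, Function.comp_def] using this
    have h := h1.mul h2
    simp only [one_mul] at h
    exact h
  show F n ≤ 1
  exact ge_of_tendsto' hlim hFG

end KershawAux

/-- consequence of Kershaw's inequality. -/
theorem stmt_10 (n nT i : ℕ) (hn : 1 ≤ n) (hnT : 2 ≤ nT) (hi1 : 1 ≤ i) (hi2 : i ≤ nT - 1) :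
    Real.Gamma (n : ℝ) / Real.Gamma ((n : ℝ) + (i : ℝ) / ((nT : ℝ) - 1)) ≤
        ((n : ℝ) - 1 / 2 + (i : ℝ) / (2 * ((nT : ℝ) - 1))) ^ (-((i : ℝ) / ((nT : ℝ) - 1))) ∧
      ((n : ℝ) - 1 / 2 + (i : ℝ) / (2 * ((nT : ℝ) - 1))) ^ (-((i : ℝ) / ((nT : ℝ) - 1))) ≤
        ((n : ℝ) - 1 / 2) ^ (-((i : ℝ) / ((nT : ℝ) - 1))) := by
  have hd : (0:ℝ) < (nT:ℝ) - 1 := by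
    have : (2:ℝ) ≤ nT := by exact_mod_cast hnT
    linarith
  have hn1 : (1:ℝ) ≤ (n:ℝ) := by exact_mod_cast hn
  set t : ℝ := (i:ℝ) / ((nT:ℝ) - 1) with hts
  have ht0 : 0 < t := by
    apply div_pos _ hd
    exact_mod_cast hi1
  have hile : (i:ℝ) ≤ (nT:ℝ) - 1 := by
    have h := hi2
    have : (i:ℝ) ≤ ((nT - 1 : ℕ):ℝ) := by exact_mod_cast h
    rwa [Nat.cast_sub (by omega), Nat.cast_one] at this
  have ht1 : t ≤ 1 := by
    rw [hts, div_le_one hd]; exact hile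
  have e : (i:ℝ) / (2 * ((nT:ℝ) - 1)) = t / 2 := by
    rw [hts, div_div, mul_comm]
  rw [e]
  have hA : (0:ℝ) < (n:ℝ) - 1/2 + t/2 := by linarith
  constructor
  · rcases eq_or_lt_of_le ht1 with heq | hlt
    · rw [heq]
      have eg : Real.Gamma ((n:ℝ) + 1) = (n:ℝ) * Real.Gamma n :=
        Real.Gamma_add_one (by positivity)
      rw [eg, show (n:ℝ) - 1/2 + 1/2 = (n:ℝ) by ring, Real.rpow_neg_one]
      apply le_of_eq
      have hg : Real.Gamma (n:ℝ) ≠ 0 := (Real.Gamma_pos_of_pos (by linarith)).ne'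
      field_simp
    · have hk := kershaw' ht0 hlt n hn
      rw [Real.rpow_neg hA.le]
      have hApt : (0:ℝ) < ((n:ℝ) - 1/2 + t/2) ^ t := Real.rpow_pos_of_pos hA t
      rw [inv_eq_one_div, le_div_iff₀ hApt]
      calc Real.Gamma (n:ℝ) / Real.Gamma ((n:ℝ) + t) * ((n:ℝ) - 1/2 + t/2) ^ t
          = ((n:ℝ) - 1/2 + t/2) ^ t * Real.Gamma (n:ℝ) / Real.Gamma ((n:ℝ) + t) := by ring
        _ ≤ 1 := hk
  · apply Real.rpow_le_rpow_of_nonpos (by linarith) (by linarith) (by linarith)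
end

section
/- For integers n ≥ 1 and n_T ≥ 2, Σ_{i=1}^{n_T-1} B(n, i/(n_T-1)) ≤ Σ_{i=1}^{n_T-1} Γ(i/(n_T-1)) (n - 1/2)^{-i/(n_T-1)}, and for fixed n_T the right-hand side is a strictly decreasing function of n that tends to 0 as n → ∞. -/
open Real Filter Topology

private lemma artanh_bound {x : ℝ} (hx : 1 ≤ x) : 2 * (x - 1) / (x + 1) ≤ Real.log x := by
  have h0 : (0:ℝ) < x := lt_of_lt_of_le one_pos hx
  set f : ℝ → ℝ := fun y => Real.log y - 2 + 4 / (y + 1) with hf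
  have hderiv : ∀ y ∈ interior (Set.Ici (1:ℝ)), HasDerivAt f (y⁻¹ + 4 * (-1 / (y+1)^2)) y := by
    intro y hy
    rw [interior_Ici] at hy
    have hy1 : (1:ℝ) < y := hy
    have hy0 : y ≠ 0 := by linarith
    have hyn : y + 1 ≠ 0 := by linarith
    have h1 : HasDerivAt Real.log y⁻¹ y := Real.hasDerivAt_log hy0
    have h2 : HasDerivAt (fun y : ℝ => y + 1) 1 y := (hasDerivAt_id y).add_const 1
    have h3 : HasDerivAt (fun y : ℝ => ((fun y : ℝ => y + 1) y)⁻¹) (-1 / (y+1)^2) y := by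
      have h5 := h2.inv hyn
      exact h5
    have h4 := (h1.sub_const 2).add (h3.const_mul 4)
    have e : f = ((fun x => Real.log x - 2) + fun y => 4 * ((fun y : ℝ => y + 1) y)⁻¹) := by
      funext z
      simp only [hf, Pi.add_apply]
      ring
    rw [e]
    exact h4
  have hmono : MonotoneOn f (Set.Ici 1) := by
    apply monotoneOn_of_deriv_nonneg (convex_Ici 1)
    · apply ContinuousOn.add
      · apply ContinuousOn.sub
        · apply Real.continuousOn_log.mono
          intro y hy
          simp only [Set.mem_compl_iff, Set.mem_singleton_iff]
          have : (1:ℝ) ≤ y := hy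
          intro h; rw [h] at this; linarith
        · exact continuousOn_const
      · apply ContinuousOn.div continuousOn_const (by fun_prop)
        intro y hy
        have : (1:ℝ) ≤ y := hy
        intro h; linarith [h]
    · intro y hy
      exact (hderiv y hy).differentiableAt.differentiableWithinAt
    · intro y hy
      rw [(hderiv y hy).deriv]
      rw [interior_Ici] at hy
      have hy1 : (1:ℝ) < y := hy
      have h1 : (0:ℝ) < y := by linarith
      have h2 : (0:ℝ) < (y+1)^2 := by positivity
      have : y⁻¹ + 4 * (-1 / (y+1)^2) = ((y-1)^2) / (y * (y+1)^2) := by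
        field_simp; ring
      rw [this]
      positivity
  have hone : f 1 ≤ f x := hmono (Set.self_mem_Ici) hx hx
  have hf1 : f 1 = 0 := by simp [hf]; norm_num
  have heq : 2 * (x - 1) / (x + 1) = 2 - 4 / (x + 1) := by
    have : x + 1 ≠ 0 := by linarith
    field_simp; ring
  rw [heq]
  have := hone; rw [hf1] at this
  simp only [hf] at this
  linarith

private lemma log_crux {n : ℕ} (hn : 1 ≤ n) :
    1 / (n:ℝ) ≤ Real.log ((2*(n:ℝ)+1)/(2*(n:ℝ)-1)) := by
  have hn1 : (1:ℝ) ≤ (n:ℝ) := by exact_mod_cast hn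
  have h1 : (0:ℝ) < 2*(n:ℝ) - 1 := by linarith
  have hx : (1:ℝ) ≤ (2*(n:ℝ)+1)/(2*(n:ℝ)-1) := by
    rw [le_div_iff₀ h1]; linarith
  have key := artanh_bound hx
  have hn0 : (n:ℝ) ≠ 0 := by linarith
  have heq : 2 * ((2*(n:ℝ)+1)/(2*(n:ℝ)-1) - 1) / ((2*(n:ℝ)+1)/(2*(n:ℝ)-1) + 1) = 1/(n:ℝ) := by
    rw [div_eq_div_iff]
    · field_simp; ring
    · have : (0:ℝ) < (2*(n:ℝ)+1)/(2*(n:ℝ)-1) := by positivity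
      linarith
    · linarith
  linarith [heq ▸ key]

private lemma Gamma_nat_add {s : ℝ} (hs : 0 < s) (n : ℕ) :
    Real.Gamma ((n:ℝ) + s) = Real.Gamma s * ∏ j ∈ Finset.range n, (s + j) := by
  induction n with
  | zero => simp
  | succ n ih =>
    have hne : (n:ℝ) + s ≠ 0 := by positivity
    have h : ((n+1:ℕ):ℝ) + s = ((n:ℝ) + s) + 1 := by push_cast; ring
    rw [h, Real.Gamma_add_one hne, ih, Finset.prod_range_succ]
    ring

private lemma keyIneq {s : ℝ} (hs0 : 0 < s) (hs1 : s ≤ 1) {n : ℕ} (hn : 1 ≤ n) :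
    Real.Gamma (n:ℝ) * Real.Gamma s / Real.Gamma ((n:ℝ) + s) ≤
      Real.Gamma s * ((n:ℝ) - 1/2) ^ (-s) := by
  set F : ℕ → ℝ := fun m =>
    Real.Gamma (m:ℝ) * Real.Gamma s / Real.Gamma ((m:ℝ) + s) * ((m:ℝ) - 1/2) ^ s with hF
  -- monotone step
  have hstep : ∀ m : ℕ, 1 ≤ m → F m ≤ F (m+1) := by
    intro m hm
    have hm1 : (1:ℝ) ≤ (m:ℝ) := by exact_mod_cast hm
    have hb : (0:ℝ) < (m:ℝ) - 1/2 := by linarith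
    have hb' : (0:ℝ) < (m:ℝ) + 1/2 := by linarith
    have hΓm : 0 < Real.Gamma (m:ℝ) := Real.Gamma_pos_of_pos (by linarith)
    have hΓs : 0 < Real.Gamma s := Real.Gamma_pos_of_pos hs0
    have hΓms : 0 < Real.Gamma ((m:ℝ) + s) := Real.Gamma_pos_of_pos (by linarith)
    have hGm1 : Real.Gamma ((m+1:ℕ):ℝ) = (m:ℝ) * Real.Gamma (m:ℝ) := by
      have : ((m+1:ℕ):ℝ) = (m:ℝ) + 1 := by push_cast; ring
      rw [this, Real.Gamma_add_one (by linarith)]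
    have hGms1 : Real.Gamma (((m+1:ℕ)):ℝ) - 0 = Real.Gamma (((m+1:ℕ)):ℝ) := by ring
    have hGms : Real.Gamma (((m+1:ℕ):ℝ) + s) = ((m:ℝ) + s) * Real.Gamma ((m:ℝ) + s) := by
      have : ((m+1:ℕ):ℝ) + s = ((m:ℝ) + s) + 1 := by push_cast; ring
      rw [this, Real.Gamma_add_one (by positivity)]
    have hcast : ((m+1:ℕ):ℝ) - 1/2 = (m:ℝ) + 1/2 := by push_cast; ring
    -- key scalar inequality : (m+s) * (m-1/2)^s ≤ m * (m+1/2)^s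
    have hratio : ((m:ℝ) + 1/2)/((m:ℝ) - 1/2) = (2*(m:ℝ)+1)/(2*(m:ℝ)-1) := by
      rw [div_eq_div_iff (by linarith) (by linarith)]; ring
    have hlog := log_crux hm
    have hexp : (1 + s/(m:ℝ)) ≤ (((m:ℝ) + 1/2)/((m:ℝ) - 1/2)) ^ s := by
      rw [Real.rpow_def_of_pos (by positivity)]
      calc 1 + s/(m:ℝ) ≤ Real.exp (s/(m:ℝ)) := by
            have := Real.add_one_le_exp (s/(m:ℝ)); linarith
        _ ≤ Real.exp (Real.log (((m:ℝ) + 1/2)/((m:ℝ) - 1/2)) * s) := by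
            apply Real.exp_le_exp.2
            rw [hratio]
            calc s/(m:ℝ) = s * (1/(m:ℝ)) := by ring
              _ ≤ s * Real.log ((2*(m:ℝ)+1)/(2*(m:ℝ)-1)) :=
                  mul_le_mul_of_nonneg_left hlog hs0.le
              _ = _ := by ring
    have hkey : ((m:ℝ) + s) * ((m:ℝ) - 1/2) ^ s ≤ (m:ℝ) * ((m:ℝ) + 1/2) ^ s := by
      have h2 : (m:ℝ) * (1 + s/(m:ℝ)) = (m:ℝ) + s := by field_simp
      have h3 := mul_le_mul_of_nonneg_left hexp (by positivity : (0:ℝ) ≤ (m:ℝ))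
      rw [h2] at h3
      rw [Real.div_rpow hb'.le hb.le] at h3
      set X := ((m:ℝ) + 1/2) ^ s with hX
      set Y := ((m:ℝ) - 1/2) ^ s with hY
      have hp : (0:ℝ) < Y := Real.rpow_pos_of_pos hb s
      calc ((m:ℝ) + s) * Y ≤ (m:ℝ) * (X / Y) * Y := mul_le_mul_of_nonneg_right h3 hp.le
        _ = (m:ℝ) * X := by rw [mul_assoc, div_mul_cancel₀ _ hp.ne']
    -- assemble
    simp only [hF]
    rw [hGm1, hGms, hcast]
    rw [div_mul_eq_mul_div, div_mul_eq_mul_div, div_le_div_iff₀ (by positivity) (by positivity)]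
    have hexpand : (m:ℝ) * Real.Gamma (m:ℝ) * Real.Gamma s * ((m:ℝ) + 1/2) ^ s
        * Real.Gamma ((m:ℝ) + s)
        = (Real.Gamma (m:ℝ) * Real.Gamma s * Real.Gamma ((m:ℝ) + s))
          * ((m:ℝ) * ((m:ℝ) + 1/2) ^ s) := by ring
    have hexpand2 : Real.Gamma (m:ℝ) * Real.Gamma s * ((m:ℝ) - 1/2) ^ s
        * (((m:ℝ) + s) * Real.Gamma ((m:ℝ) + s))
        = (Real.Gamma (m:ℝ) * Real.Gamma s * Real.Gamma ((m:ℝ) + s))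
          * (((m:ℝ) + s) * ((m:ℝ) - 1/2) ^ s) := by ring
    rw [hexpand, hexpand2]
    exact mul_le_mul_of_nonneg_left hkey (by positivity)
  -- limit
  have hlim : Tendsto F atTop (𝓝 (Real.Gamma s)) := by
    have hGseq : Tendsto (fun m : ℕ => Real.GammaSeq s (m-1)) atTop (𝓝 (Real.Gamma s)) :=
      (Real.GammaSeq_tendsto_Gamma s).comp (tendsto_sub_atTop_nat 1)
    have hbase : Tendsto (fun m : ℕ => ((m:ℝ) - 1/2)/((m:ℝ) - 1)) atTop (𝓝 1) := by
      have h1 : Tendsto (fun m : ℕ => (m:ℝ) - 1) atTop atTop := by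
        simpa [sub_eq_add_neg] using
          tendsto_atTop_add_const_right atTop (-1 : ℝ) tendsto_natCast_atTop_atTop
      have h2 : Tendsto (fun m : ℕ => ((m:ℝ) - 1)⁻¹) atTop (𝓝 0) := h1.inv_tendsto_atTop
      have h3 : Tendsto (fun m : ℕ => 1 + (1/2) * ((m:ℝ) - 1)⁻¹) atTop (𝓝 1) := by
        have := (h2.const_mul (1/2 : ℝ)).const_add 1
        simpa using this
      apply h3.congr'
      filter_upwards [eventually_ge_atTop 2] with m hm
      have hm1 : (2:ℝ) ≤ (m:ℝ) := by exact_mod_cast hm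
      have hne : (m:ℝ) - 1 ≠ 0 := by linarith
      field_simp
      ring
    have hpow : Tendsto (fun m : ℕ => (((m:ℝ) - 1/2)/((m:ℝ) - 1)) ^ s) atTop (𝓝 1) := by
      have := hbase.rpow_const (p := s) (Or.inl one_ne_zero)
      simpa using this
    have hmul := hGseq.mul hpow
    rw [mul_one] at hmul
    apply hmul.congr'
    filter_upwards [eventually_ge_atTop 2] with m hm
    have hm1 : (1:ℝ) ≤ (m:ℝ) := by
      have : (2:ℝ) ≤ (m:ℝ) := by exact_mod_cast hm
      linarith
    have hm2 : (2:ℝ) ≤ (m:ℝ) := by exact_mod_cast hm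
    have hΓs : 0 < Real.Gamma s := Real.Gamma_pos_of_pos hs0
    -- compute F m
    have hGm : Real.Gamma (m:ℝ) = (Nat.factorial (m-1) : ℝ) := by
      have h : (m:ℝ) = ((m-1:ℕ):ℝ) + 1 := by
        rw [Nat.cast_sub (by omega : 1 ≤ m)]; norm_num
      rw [h, Real.Gamma_nat_eq_factorial]
    have hGms : Real.Gamma ((m:ℝ) + s) = Real.Gamma s * ∏ j ∈ Finset.range m, (s + j) :=
      Gamma_nat_add hs0 m
    have hprodpos : 0 < ∏ j ∈ Finset.range m, (s + (j:ℝ)) := by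
      apply Finset.prod_pos
      intro j hj
      positivity
    have hcast1 : ((m-1:ℕ):ℝ) = (m:ℝ) - 1 := by
      rw [Nat.cast_sub (by omega : 1 ≤ m)]; norm_num
    have hGseqEq : Real.GammaSeq s (m-1)
        = ((m:ℝ) - 1) ^ s * (Nat.factorial (m-1) : ℝ) / ∏ j ∈ Finset.range m, (s + j) := by
      rw [Real.GammaSeq, hcast1, Nat.sub_add_cancel (by omega : 1 ≤ m)]
    simp only [hF]
    rw [hGm, hGms, hGseqEq]
    have hm1pos : (0:ℝ) < (m:ℝ) - 1 := by linarith
    have hm12pos : (0:ℝ) < (m:ℝ) - 1/2 := by linarith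
    rw [Real.div_rpow hm12pos.le hm1pos.le]
    have hppos : (0:ℝ) < ((m:ℝ) - 1) ^ s := Real.rpow_pos_of_pos hm1pos s
    set A := ((m:ℝ) - 1) ^ s with hA
    set B := ((m:ℝ) - 1/2) ^ s with hB
    field_simp
  -- conclude
  have hchain : ∀ m : ℕ, n ≤ m → F n ≤ F m := by
    intro m hm
    induction m with
    | zero => omega
    | succ k ih =>
      rcases Nat.lt_or_ge n (k+1) with h | h
      · have hk : n ≤ k := by omega
        exact (ih hk).trans (hstep k (by omega))
      · have : n = k + 1 := by omega
        rw [this]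
    
  have hFle : F n ≤ Real.Gamma s :=
    ge_of_tendsto hlim (eventually_atTop.2 ⟨n, hchain⟩)
  have hb : (0:ℝ) < (n:ℝ) - 1/2 := by
    have : (1:ℝ) ≤ (n:ℝ) := by exact_mod_cast hn
    linarith
  have hp : (0:ℝ) < ((n:ℝ) - 1/2) ^ s := Real.rpow_pos_of_pos hb s
  rw [Real.rpow_neg hb.le, ← div_eq_mul_inv, le_div_iff₀ hp]
  exact hFle

/-- the beta-function sum is bounded by a quantity that is strictly
decreasing in n and tends to 0 as n → ∞. -/
theorem stmt_11 (nT : ℕ) (hnT : 2 ≤ nT) :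
    (∀ n : ℕ, 1 ≤ n →
      ∑ i ∈ Finset.Icc 1 (nT - 1),
          Real.Gamma (n : ℝ) * Real.Gamma ((i : ℝ) / ((nT : ℝ) - 1)) /
            Real.Gamma ((n : ℝ) + (i : ℝ) / ((nT : ℝ) - 1)) ≤
        ∑ i ∈ Finset.Icc 1 (nT - 1),
          Real.Gamma ((i : ℝ) / ((nT : ℝ) - 1)) *
            ((n : ℝ) - 1 / 2) ^ (-((i : ℝ) / ((nT : ℝ) - 1)))) ∧
    StrictAntiOn (fun n : ℕ =>
      ∑ i ∈ Finset.Icc 1 (nT - 1),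
        Real.Gamma ((i : ℝ) / ((nT : ℝ) - 1)) *
          ((n : ℝ) - 1 / 2) ^ (-((i : ℝ) / ((nT : ℝ) - 1)))) (Set.Ici 1) ∧
    Tendsto (fun n : ℕ =>
      ∑ i ∈ Finset.Icc 1 (nT - 1),
        Real.Gamma ((i : ℝ) / ((nT : ℝ) - 1)) *
          ((n : ℝ) - 1 / 2) ^ (-((i : ℝ) / ((nT : ℝ) - 1)))) atTop (nhds 0) := by
  have hd : (0:ℝ) < (nT:ℝ) - 1 := by
    have : (2:ℝ) ≤ (nT:ℝ) := by exact_mod_cast hnT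
    linarith
  have hs0 : ∀ i ∈ Finset.Icc 1 (nT - 1), 0 < (i : ℝ) / ((nT : ℝ) - 1) := by
    intro i hi
    rw [Finset.mem_Icc] at hi
    have : (0:ℝ) < (i:ℝ) := by exact_mod_cast Nat.lt_of_lt_of_le Nat.zero_lt_one hi.1
    positivity
  have hs1 : ∀ i ∈ Finset.Icc 1 (nT - 1), (i : ℝ) / ((nT : ℝ) - 1) ≤ 1 := by
    intro i hi
    rw [Finset.mem_Icc] at hi
    rw [div_le_one hd]
    have h2 : (i:ℝ) ≤ ((nT - 1 : ℕ):ℝ) := by exact_mod_cast hi.2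
    have h3 : ((nT - 1 : ℕ):ℝ) = (nT:ℝ) - 1 := by
      have := Nat.cast_sub (by omega : 1 ≤ nT) (R := ℝ)
      push_cast at this ⊢
      linarith [this]
    linarith
  refine ⟨?_, ?_, ?_⟩
  · intro n hn
    apply Finset.sum_le_sum
    intro i hi
    exact keyIneq (hs0 i hi) (hs1 i hi) hn
  · intro a ha b hb hab
    apply Finset.sum_lt_sum_of_nonempty
    · exact Finset.nonempty_Icc.mpr (by omega)
    · intro i hi
      have hΓ : 0 < Real.Gamma ((i : ℝ) / ((nT : ℝ) - 1)) := Real.Gamma_pos_of_pos (hs0 i hi)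
      have ha1 : (1:ℝ) ≤ (a:ℝ) := by exact_mod_cast ha
      have hab' : (a:ℝ) < (b:ℝ) := by exact_mod_cast hab
      have hA : (0:ℝ) < (a:ℝ) - 1/2 := by linarith
      have hB : (0:ℝ) < (b:ℝ) - 1/2 := by linarith
      apply mul_lt_mul_of_pos_left _ hΓ
      rw [Real.rpow_neg hA.le, Real.rpow_neg hB.le]
      apply inv_strictAnti₀ (Real.rpow_pos_of_pos hA _)
      exact Real.rpow_lt_rpow hA.le (by linarith) (hs0 i hi)
  · have h : Tendsto (fun n : ℕ =>
        ∑ i ∈ Finset.Icc 1 (nT - 1),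
          Real.Gamma ((i : ℝ) / ((nT : ℝ) - 1)) *
            ((n : ℝ) - 1 / 2) ^ (-((i : ℝ) / ((nT : ℝ) - 1)))) atTop
        (𝓝 (∑ i ∈ Finset.Icc 1 (nT - 1), (0:ℝ))) := by
      apply tendsto_finset_sum
      intro i hi
      have hbase : Tendsto (fun n : ℕ => (n:ℝ) - 1/2) atTop atTop := by
        simpa [sub_eq_add_neg] using
          tendsto_atTop_add_const_right atTop (-(1/2) : ℝ) tendsto_natCast_atTop_atTop
      have := ((tendsto_rpow_neg_atTop (hs0 i hi)).comp hbase).const_mul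
        (Real.Gamma ((i : ℝ) / ((nT : ℝ) - 1)))
      simpa using this
    simpa using h
end

section
/- For n ≥ 1 and n_T ≥ 2, the following two expressions are equal: log₂(e) Σ_{i=1}^{n} binom(n,i)(-1)^i Σ_{l=1}^{i(n_T-1)} 1/l = -(log₂(e)/(n_T-1)) Σ_{i=1}^{n_T-1} B(n, i/(n_T-1)). -/
open Real

section Aux

lemma prod_pos'' (n : ℕ) (x : ℝ) (hx : 0 < x) : 0 < ∏ j ∈ Finset.range n, (x + j) :=
  Finset.prod_pos (fun j _ => by positivity)


lemma Frec (n : ℕ) (x : ℝ) :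
    ∑ k ∈ Finset.range (n+2), (-1:ℝ)^k * (((n+1).choose k : ℕ) : ℝ) / (x + k)
      = ∑ k ∈ Finset.range (n+1), (-1:ℝ)^k * ((n.choose k : ℕ) : ℝ) / (x + k)
        - ∑ k ∈ Finset.range (n+1), (-1:ℝ)^k * ((n.choose k : ℕ) : ℝ) / ((x+1) + k) := by
  rw [Finset.sum_range_succ' (fun k => (-1:ℝ)^k * (((n+1).choose k : ℕ) : ℝ) / (x + k)) (n+1)]
  have e2 : ∀ k ∈ Finset.range (n+1),
      (fun k => (-1:ℝ)^k * (((n+1).choose k : ℕ) : ℝ) / (x + k)) (k+1)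
      = -((-1:ℝ)^k * ((n.choose k : ℕ) : ℝ) / ((x+1)+k))
        - (-1:ℝ)^k * ((n.choose (k+1) : ℕ) : ℝ) / ((x+1)+k) := by
    intro k _
    simp only [Nat.choose_succ_succ']
    push_cast
    ring
  rw [Finset.sum_congr rfl e2]
  have e3 : ∑ k ∈ Finset.range (n+1), (-1:ℝ)^k * ((n.choose k : ℕ) : ℝ)/(x+k)
      = 1/x - ∑ k ∈ Finset.range n, (-1:ℝ)^k * ((n.choose (k+1) : ℕ) : ℝ)/((x+1)+k) := by
    rw [Finset.sum_range_succ' (fun k => (-1:ℝ)^k * ((n.choose k : ℕ) : ℝ) / (x + k)) n]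
    have e5 : ∀ k ∈ Finset.range n,
        (fun k => (-1:ℝ)^k * ((n.choose k : ℕ) : ℝ) / (x + k)) (k+1)
        = -((-1:ℝ)^k * ((n.choose (k+1) : ℕ) : ℝ)/((x+1)+k)) := by
      intro k _; push_cast; ring
    rw [Finset.sum_congr rfl e5, Finset.sum_neg_distrib]
    simp only [Nat.choose_zero_right, Nat.cast_one, add_zero, one_mul]; ring
  have e4 : ∑ k ∈ Finset.range (n+1), (-1:ℝ)^k * ((n.choose (k+1) : ℕ) : ℝ)/((x+1)+k)
      = ∑ k ∈ Finset.range n, (-1:ℝ)^k * ((n.choose (k+1) : ℕ) : ℝ)/((x+1)+k) := by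
    rw [Finset.sum_range_succ]
    simp
  rw [Finset.sum_sub_distrib, Finset.sum_neg_distrib, e3, e4]
  simp only [Nat.choose_zero_right, Nat.cast_one, add_zero, one_mul]
  ring

lemma partial_frac (n : ℕ) : ∀ x : ℝ, 0 < x →
    ∑ k ∈ Finset.range (n+1), (-1:ℝ)^k * ((n.choose k : ℕ) : ℝ) / (x + k)
      = (n.factorial : ℝ) / ∏ j ∈ Finset.range (n+1), (x + j) := by
  induction n with
  | zero => intro x hx; simp
  | succ n ih =>
    intro x hx
    have hx1 : (0:ℝ) < x + 1 := by linarith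
    
    rw [Frec, ih x hx, ih (x+1) hx1]
    set d := ∏ j ∈ Finset.range (n+1), (x + j) with hd
    set e := ∏ j ∈ Finset.range (n+1), ((x+1) + j) with he
    have hdp : 0 < d := prod_pos'' _ _ hx
    have hep : 0 < e := prod_pos'' _ _ hx1
    have h1 : ∏ j ∈ Finset.range (n+2), (x + j) = d * (x + (n+1)) := by
      rw [Finset.prod_range_succ]
      push_cast
      ring
    have h2 : ∏ j ∈ Finset.range (n+2), (x + j) = e * x := by
      rw [he, Finset.prod_range_succ' (fun j => x + (j:ℝ)) (n+1)]
      simp only [Nat.cast_zero, add_zero, Nat.cast_add, Nat.cast_one]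
      congr 1
      apply Finset.prod_congr rfl
      intro j _; ring
    have key : e * x = d * (x + (n+1)) := by rw [← h2, h1]
    rw [h1, Nat.factorial_succ]
    push_cast
    field_simp
    linear_combination key


noncomputable def Hs (N : ℕ) : ℝ := ∑ l ∈ Finset.Icc 1 N, (1:ℝ)/(l:ℝ)

lemma Hs_zero : Hs 0 = 0 := by simp [Hs]

lemma Hs_Ioc (N : ℕ) : Hs N = ∑ l ∈ Finset.Ioc 0 N, (1:ℝ)/(l:ℝ) := by
  rw [Hs, ← Finset.Icc_add_one_left_eq_Ioc]
  simp

lemma Hs_diff (k m : ℕ) :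
    Hs ((k+1)*m) - Hs (k*m) = ∑ j ∈ Finset.Icc 1 m, (1:ℝ)/((k*m+j : ℕ):ℝ) := by
  have h1 : k*m ≤ (k+1)*m := Nat.mul_le_mul_right _ (by omega)
  have h2 := Finset.sum_Ioc_consecutive (fun l : ℕ => (1:ℝ)/(l:ℝ)) (Nat.zero_le (k*m)) h1
  rw [Hs_Ioc, Hs_Ioc, ← h2]
  have h3 : Finset.Ioc (k*m) ((k+1)*m)
      = Finset.map (addLeftEmbedding (k*m)) (Finset.Ioc 0 m) := by
    rw [Finset.map_add_left_Ioc]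
    congr 1
    ring
  rw [h3, Finset.sum_map,
    show Finset.Ioc 0 m = Finset.Icc 1 m from (Finset.Icc_add_one_left_eq_Ioc 0 m).symm]
  simp [addLeftEmbedding]

lemma pascal (p m : ℕ) :
    ∑ i ∈ Finset.Icc 1 (p+1), (((p+1).choose i : ℕ) : ℝ) * (-1:ℝ)^i * Hs (i*m)
    = -∑ k ∈ Finset.range (p+1), (-1:ℝ)^k * ((p.choose k : ℕ) : ℝ) * (Hs ((k+1)*m) - Hs (k*m)) := by
  have hIcc : Finset.Icc 1 (p+1) = Finset.Ico 1 (p+2) := by rw [show p+2 = p+1+1 from rfl, Finset.Ico_add_one_right_eq_Icc]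
  rw [hIcc, Finset.sum_Ico_eq_sum_range]
  have hb : p + 2 - 1 = p + 1 := by omega
  rw [hb]
  set h : ℕ → ℝ := fun j => (-1:ℝ)^j * ((p.choose j : ℕ) : ℝ) * Hs (j*m) with hh
  have e1 : ∀ k ∈ Finset.range (p+1),
      (((p+1).choose (1+k) : ℕ) : ℝ) * (-1:ℝ)^(1+k) * Hs ((1+k)*m)
      = -((-1:ℝ)^k * ((p.choose k : ℕ) : ℝ) * Hs ((k+1)*m)) + h (k+1) := by
    intro k _
    have : 1 + k = k + 1 := by omega
    rw [this, Nat.choose_succ_succ', hh]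
    push_cast
    ring
  rw [Finset.sum_congr rfl e1, Finset.sum_add_distrib]
  have e2 : ∑ k ∈ Finset.range (p+1), h (k+1) = ∑ k ∈ Finset.range (p+1), h k := by
    have a1 := Finset.sum_range_succ' h (p+1)
    have a2 := Finset.sum_range_succ h (p+1)
    have h0 : h 0 = 0 := by simp [hh, Hs_zero]
    have hp1 : h (p+1) = 0 := by simp [hh, Nat.choose_succ_self]
    rw [h0, add_zero] at a1
    rw [hp1, add_zero] at a2
    linarith
  rw [e2, ← Finset.sum_neg_distrib, ← Finset.sum_add_distrib]
  apply Finset.sum_congr rfl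
  intro k _
  simp only [hh]
  ring


lemma gamma_add_nat' (x : ℝ) (hx : 0 < x) (n : ℕ) :
    Real.Gamma (x + n) = (∏ j ∈ Finset.range n, (x + j)) * Real.Gamma x := by
  induction n with
  | zero => simp
  | succ n ih =>
    have hxn : x + n ≠ 0 := by positivity
    rw [show x + (n+1:ℕ) = (x + n) + 1 by push_cast; ring, Real.Gamma_add_one hxn,
      ih, Finset.prod_range_succ]
    ring

lemma prod_pos' (n : ℕ) (x : ℝ) (hx : 0 < x) : 0 < ∏ j ∈ Finset.range n, (x + j) :=
  Finset.prod_pos (fun j _ => by positivity)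

lemma beta_eq (p : ℕ) (x : ℝ) (hx : 0 < x) :
    Real.Gamma ((p+1 : ℕ) : ℝ) * Real.Gamma x / Real.Gamma (((p+1:ℕ):ℝ) + x)
      = ∑ k ∈ Finset.range (p+1), (-1:ℝ)^k * ((p.choose k : ℕ) : ℝ) / (x + k) := by
  have hgx : Real.Gamma x ≠ 0 := (Real.Gamma_pos_of_pos hx).ne'
  have h1 : Real.Gamma (((p+1:ℕ):ℝ) + x) = (∏ j ∈ Finset.range (p+1), (x + j)) * Real.Gamma x := by
    rw [show ((p+1:ℕ):ℝ) + x = x + ((p+1:ℕ):ℝ) by ring, gamma_add_nat' x hx (p+1)]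
  have h2 : Real.Gamma ((p+1:ℕ):ℝ) = (p.factorial : ℝ) := by
    push_cast
    exact Real.Gamma_nat_eq_factorial p
  rw [h1, h2, partial_frac p x hx]
  have hprod : (∏ j ∈ Finset.range (p+1), (x+(j:ℝ))) ≠ 0 := (prod_pos' _ _ hx).ne'
  field_simp

end Aux

/-- equality of the two expressions for E[log₂ cos²θ]. -/
theorem stmt_17 (n nT : ℕ) (hn : 1 ≤ n) (hnT : 2 ≤ nT) :
    Real.logb 2 (Real.exp 1) *
        ∑ i ∈ Finset.Icc 1 n, (n.choose i : ℝ) * (-1 : ℝ) ^ i *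
          ∑ l ∈ Finset.Icc 1 (i * (nT - 1)), (1 : ℝ) / (l : ℝ) =
      -(Real.logb 2 (Real.exp 1) / ((nT : ℝ) - 1)) *
        ∑ i ∈ Finset.Icc 1 (nT - 1),
          Real.Gamma (n : ℝ) * Real.Gamma ((i : ℝ) / ((nT : ℝ) - 1)) /
            Real.Gamma ((n : ℝ) + (i : ℝ) / ((nT : ℝ) - 1)) := by
  obtain ⟨p, rfl⟩ : ∃ p, n = p + 1 := ⟨n - 1, by omega⟩
  set L := Real.logb 2 (Real.exp 1) with hL
  set m := nT - 1 with hm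
  have hm1 : 1 ≤ m := by omega
  have hM : (nT : ℝ) - 1 = (m : ℝ) := by
    rw [hm]
    push_cast [Nat.cast_sub (by omega : 1 ≤ nT)]
    ring
  rw [hM]
  have hMpos : (0:ℝ) < (m:ℝ) := by exact_mod_cast hm1
  -- rewrite the Beta terms via partial fractions
  have hrhs : ∀ i ∈ Finset.Icc 1 m,
      Real.Gamma ((p+1:ℕ):ℝ) * Real.Gamma ((i:ℝ)/(m:ℝ)) /
          Real.Gamma (((p+1:ℕ):ℝ) + (i:ℝ)/(m:ℝ))
        = ∑ k ∈ Finset.range (p+1), (-1:ℝ)^k * ((p.choose k : ℕ) : ℝ) / ((i:ℝ)/(m:ℝ) + k) := by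
    intro i hi
    have hi1 : 1 ≤ i := (Finset.mem_Icc.mp hi).1
    have hipos : (0:ℝ) < (i:ℝ)/(m:ℝ) := by
      apply div_pos _ hMpos
      exact_mod_cast hi1
    exact beta_eq p _ hipos
  rw [Finset.sum_congr rfl hrhs, Finset.sum_comm]
  -- the combinatorial identity
  have P3 : ∑ i ∈ Finset.Icc 1 (p+1), (((p+1).choose i : ℕ) : ℝ) * (-1:ℝ)^i *
        (∑ l ∈ Finset.Icc 1 (i*m), (1:ℝ)/(l:ℝ))
      = -∑ k ∈ Finset.range (p+1), (-1:ℝ)^k * ((p.choose k : ℕ) : ℝ) *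
        (∑ j ∈ Finset.Icc 1 m, (1:ℝ)/((k*m+j : ℕ):ℝ)) := by
    have P := pascal p m
    simp only [Hs_diff] at P
    simpa [Hs] using P
  rw [P3]
  -- per-k inner sum manipulation
  have inner : ∀ k ∈ Finset.range (p+1),
      ∑ i ∈ Finset.Icc 1 m, (-1:ℝ)^k * ((p.choose k : ℕ) : ℝ)/((i:ℝ)/(m:ℝ)+k)
      = (m:ℝ) * ((-1:ℝ)^k * ((p.choose k : ℕ) : ℝ) *
          ∑ j ∈ Finset.Icc 1 m, (1:ℝ)/((k*m+j : ℕ):ℝ)) := by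
    intro k _
    rw [Finset.mul_sum, Finset.mul_sum]
    apply Finset.sum_congr rfl
    intro i hi
    have hi1 : 1 ≤ i := (Finset.mem_Icc.mp hi).1
    have hipos : (0:ℝ) < (i:ℝ) := by exact_mod_cast hi1
    have hden : (0:ℝ) < (i:ℝ)/(m:ℝ) + k := by positivity
    have hcast : ((k*m+i : ℕ):ℝ) = (k:ℝ)*(m:ℝ) + i := by push_cast; ring
    rw [hcast]
    have h2 : (k:ℝ)*(m:ℝ)+(i:ℝ) ≠ 0 := by positivity
    field_simp
    ring
  rw [Finset.sum_congr rfl inner, ← Finset.mul_sum]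
  field_simp
end
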